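/- Let (H, Ẋ, Λ) be a dataset with HΛH⊤ ≻ 0, suppose n_h ≥ 2, and let h ∈ ℝ^{n_h} satisfy m := h⊤ (HΛH⊤)^{−1} h > n_h / tr(Λ). Then for every λ with 0 < λ ≤ (tr(Λ) m − n_h) / ((n_h − 1) m), setting H_+ := [H h] and Λ_+ := diag(Λ, λ), one has μ̂(H_+, Λ_+) < μ̂(H, Λ). -/

import Mathlib

open Matrix

/-- The volume bound `μ̂(H,Λ) := β (tr(Λ)δ)^{n_x n_h/2} det(HΛHᵀ)^{−n_x/2}`, where
`n_h` is the number of rows of `H`. -/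
noncomputable def muhat {m k : Type*} [Fintype m] [Fintype k] [DecidableEq m]
    (n_x : ℕ) (β δ : ℝ) (H : Matrix m k ℝ) (Λ : Matrix k k ℝ) : ℝ :=
  β * (Matrix.trace Λ * δ) ^ ((n_x * Fintype.card m : ℝ) / 2) *
    (H * Λ * Hᵀ).det ^ (-(n_x : ℝ) / 2)

/-- The key scalar inequality. -/
lemma key_ineq (k : ℕ) (hk : 2 ≤ k) (T m lam : ℝ) (hT : 0 < T)
    (hm : (k : ℝ) / T < m) (h0 : 0 < lam)
    (h1 : lam ≤ (T * m - k) / (((k : ℝ) - 1) * m)) :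
    (T + lam) ^ k < T ^ k * (1 + lam * m) := by
  have hk2 : (2 : ℝ) ≤ (k : ℝ) := by exact_mod_cast hk
  have hm0 : 0 < m := lt_of_le_of_lt (by positivity) hm
  have hkm : (k : ℝ) < m * T := (div_lt_iff₀ hT).mp hm
  have hden : 0 < ((k : ℝ) - 1) * m := by nlinarith
  have hb : lam * (((k : ℝ) - 1) * m) ≤ T * m - k := (le_div_iff₀ hden).mp h1
  have hrem : 0 < T - ((k : ℝ) - 1) * lam := by nlinarith
  have hu : 0 < T + lam := by linarith
  have hs1 : (-1 : ℝ) ≤ -(lam / (T + lam)) := by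
    have : lam / (T + lam) ≤ 1 := by
      rw [div_le_one hu]; linarith
    linarith
  have hs2 : -(lam / (T + lam)) ≠ 0 :=
    neg_ne_zero.mpr (ne_of_gt (div_pos h0 hu))
  have hp : (1 : ℝ) < (k : ℝ) := by linarith
  have hber := one_add_mul_self_lt_rpow_one_add hs1 hs2 hp
  rw [Real.rpow_natCast] at hber
  have h1u : (1 : ℝ) + -(lam / (T + lam)) = T / (T + lam) := by
    field_simp
    ring
  have hEq : (1 : ℝ) + (k : ℝ) * -(lam / (T + lam))
      = (T - ((k : ℝ) - 1) * lam) / (T + lam) := by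
    field_simp; ring
  rw [h1u, hEq, div_pow] at hber
  -- hber : (T - (k-1)lam)/(T+lam) < T^k/(T+lam)^k
  have hber' : (T - ((k : ℝ) - 1) * lam) * (T + lam) ^ k < T ^ k * (T + lam) :=
    (div_lt_div_iff₀ hu (pow_pos hu k)).mp hber
  have hu_le : T + lam ≤ (1 + lam * m) * (T - ((k : ℝ) - 1) * lam) := by
    nlinarith [mul_le_mul_of_nonneg_left hb h0.le]
  have hTk : (0 : ℝ) < T ^ k := pow_pos hT k
  have hchain : (T - ((k : ℝ) - 1) * lam) * (T + lam) ^ k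
      < (T - ((k : ℝ) - 1) * lam) * (T ^ k * (1 + lam * m)) := by
    calc (T - ((k : ℝ) - 1) * lam) * (T + lam) ^ k
        < T ^ k * (T + lam) := hber'
      _ ≤ T ^ k * ((1 + lam * m) * (T - ((k : ℝ) - 1) * lam)) :=
          mul_le_mul_of_nonneg_left hu_le hTk.le
      _ = (T - ((k : ℝ) - 1) * lam) * (T ^ k * (1 + lam * m)) := by ring
  exact (mul_lt_mul_iff_right₀ hrem).mp hchain

/-- With `HΛHᵀ ≻ 0`, `n_h = n_x + n_u ≥ 2`, and `h ∈ ℝ^{n_h}` satisfying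
`m := hᵀ(HΛHᵀ)⁻¹h > n_h/tr(Λ)`, for every `0 < λ ≤ (tr(Λ)m − n_h)/((n_h − 1)m)`,
setting `H₊ := [H h]`, `Λ₊ := diag(Λ, λ)`, one has `μ̂(H₊, Λ₊) < μ̂(H, Λ)`. -/
theorem stmt3 (n_x n_u n : ℕ) (hx : 0 < n_x) (hu : 0 < n_u) (hn : 0 < n)
    (β δ : ℝ) (hβ : 0 < β) (hδ : 0 < δ)
    (H : Matrix (Fin (n_x + n_u)) (Fin n) ℝ)
    (l : Fin n → ℝ) (hl : ∀ i, 0 ≤ l i)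
    (hpd : (H * Matrix.diagonal l * Hᵀ).PosDef)
    (h : Fin (n_x + n_u) → ℝ)
    (hm : h ⬝ᵥ (H * Matrix.diagonal l * Hᵀ)⁻¹.mulVec h >
        ((n_x + n_u : ℕ) : ℝ) / Matrix.trace (Matrix.diagonal l))
    (lam : ℝ) (hlam0 : 0 < lam)
    (hlam1 : lam ≤
        (Matrix.trace (Matrix.diagonal l) *
            (h ⬝ᵥ (H * Matrix.diagonal l * Hᵀ)⁻¹.mulVec h) - ((n_x + n_u : ℕ) : ℝ)) /
          ((((n_x + n_u : ℕ) : ℝ) - 1) *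
            (h ⬝ᵥ (H * Matrix.diagonal l * Hᵀ)⁻¹.mulVec h))) :
    muhat n_x β δ (Matrix.fromCols H (Matrix.of fun i (_ : Unit) => h i))
        (Matrix.diagonal (Sum.elim l fun _ : Unit => lam)) <
      muhat n_x β δ H (Matrix.diagonal l) := by
  classical
  set A : Matrix (Fin (n_x + n_u)) (Fin (n_x + n_u)) ℝ := H * Matrix.diagonal l * Hᵀ with hA
  set m : ℝ := h ⬝ᵥ A⁻¹.mulVec h with hmdef
  set T : ℝ := Matrix.trace (Matrix.diagonal l) with hTdef
  have hk2 : 2 ≤ n_x + n_u := by omega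
  -- positivity of T
  have hT0 : 0 ≤ T := by
    rw [hTdef, Matrix.trace_diagonal]
    exact Finset.sum_nonneg fun i _ => hl i
  have hT : 0 < T := by
    rcases hT0.lt_or_eq with h' | h'
    · exact h'
    · exfalso
      rw [← h', div_zero] at hm
      have hkR : (2 : ℝ) ≤ ((n_x + n_u : ℕ) : ℝ) := by exact_mod_cast hk2
      have hneg : (T * m - ((n_x + n_u : ℕ) : ℝ)) /
          ((((n_x + n_u : ℕ) : ℝ) - 1) * m) < 0 := by
        apply div_neg_of_neg_of_pos
        · rw [← h']; nlinarith
        · exact mul_pos (by linarith) hm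
      linarith
  -- the new Gram matrix
  have hC : (Matrix.of fun i (_ : Unit) => h i) = Matrix.replicateCol Unit h := rfl
  have hGram :
      Matrix.fromCols H (Matrix.of fun i (_ : Unit) => h i) *
          Matrix.diagonal (Sum.elim l fun _ : Unit => lam) *
          (Matrix.fromCols H (Matrix.of fun i (_ : Unit) => h i))ᵀ
        = A + Matrix.replicateCol Unit (lam • h) * Matrix.replicateRow Unit h := by
    rw [hC, ← Matrix.fromBlocks_diagonal, Matrix.transpose_fromCols,
      Matrix.fromCols_mul_fromBlocks, Matrix.fromCols_mul_fromRows,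
      Matrix.transpose_replicateCol]
    have hd : (Matrix.replicateCol Unit h * Matrix.diagonal (fun _ : Unit => lam))
        = Matrix.replicateCol Unit (lam • h) := by
      ext i j
      simp [Matrix.mul_apply, Matrix.replicateCol_apply, Matrix.diagonal, mul_comm]
    simp only [Matrix.mul_zero, Matrix.zero_mul, add_zero, zero_add, hd, hA,
      Matrix.mul_assoc]
  -- determinant of the new Gram matrix
  have hdetA : 0 < A.det := hpd.det_pos
  have hAunit : IsUnit A.det := isUnit_iff_ne_zero.mpr (ne_of_gt hdetA)
  have hdet :
      (A + Matrix.replicateCol Unit (lam • h) * Matrix.replicateRow Unit h).det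
        = A.det * (1 + lam * m) := by
    rw [Matrix.det_add_replicateCol_mul_replicateRow hAunit]
    congr 1
    rw [Matrix.mul_assoc, ← Matrix.replicateCol_mulVec, Matrix.det_unique]
    simp [Matrix.replicateRow_mul_replicateCol_apply, Matrix.mulVec_smul, hmdef]
  -- trace of the new weight matrix
  have htr : Matrix.trace (Matrix.diagonal (Sum.elim l fun _ : Unit => lam)) = T + lam := by
    rw [Matrix.trace_diagonal, Fintype.sum_sum_type, hTdef, Matrix.trace_diagonal]
    simp
  -- the key inequality
  have hmT : ((n_x + n_u : ℕ) : ℝ) / T < m := hm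
  have hkey : (T + lam) ^ (n_x + n_u) < T ^ (n_x + n_u) * (1 + lam * m) :=
    key_ineq (n_x + n_u) hk2 T m lam hT hmT hlam0 hlam1
  have hm0 : 0 < m := lt_of_le_of_lt (by positivity) hmT
  have hc1 : (0 : ℝ) < 1 + lam * m := by nlinarith
  -- now unfold muhat
  simp only [muhat]
  rw [hGram, hdet, htr]
  have hcard : ((Fintype.card (Fin (n_x + n_u)) : ℕ) : ℝ) = ((n_x + n_u : ℕ) : ℝ) := by
    simp
  rw [hcard]
  set x : ℝ := (n_x : ℝ) with hxdef
  set K : ℝ := ((n_x + n_u : ℕ) : ℝ) with hKdef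
  have hx0 : 0 < x := by positivity
  have ha0 : 0 < (T + lam) * δ := by positivity
  have hb0 : 0 < T * δ := by positivity
  -- split the rpow of the product
  rw [Real.mul_rpow hdetA.le hc1.le]
  have hgoal : ((T + lam) * δ) ^ (x * K / 2) * (1 + lam * m) ^ (-x / 2)
      < (T * δ) ^ (x * K / 2) := by
    have hpow : ((T + lam) * δ) ^ (n_x + n_u) < (T * δ) ^ (n_x + n_u) * (1 + lam * m) := by
      calc ((T + lam) * δ) ^ (n_x + n_u)
          = (T + lam) ^ (n_x + n_u) * δ ^ (n_x + n_u) := mul_pow _ _ _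
        _ < T ^ (n_x + n_u) * (1 + lam * m) * δ ^ (n_x + n_u) := by
            have hδk : (0:ℝ) < δ ^ (n_x + n_u) := by positivity
            exact mul_lt_mul_of_pos_right hkey hδk
        _ = (T * δ) ^ (n_x + n_u) * (1 + lam * m) := by rw [mul_pow]; ring
    have hrpow : (((T + lam) * δ) ^ (n_x + n_u)) ^ (x / 2)
        < ((T * δ) ^ (n_x + n_u) * (1 + lam * m)) ^ (x / 2) :=
      Real.rpow_lt_rpow (by positivity) hpow (by positivity)
    rw [Real.mul_rpow (by positivity) hc1.le,
      ← Real.rpow_natCast ((T + lam) * δ) (n_x + n_u),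
      ← Real.rpow_natCast (T * δ) (n_x + n_u),
      ← Real.rpow_mul ha0.le, ← Real.rpow_mul hb0.le] at hrpow
    have e1 : ((n_x + n_u : ℕ) : ℝ) * (x / 2) = x * K / 2 := by
      rw [hKdef]; ring
    rw [e1] at hrpow
    have hone : (1 + lam * m) ^ (x / 2) * (1 + lam * m) ^ (-x / 2) = 1 := by
      rw [← Real.rpow_add hc1]
      have hz : x / 2 + -x / 2 = 0 := by ring
      rw [hz, Real.rpow_zero]
    calc ((T + lam) * δ) ^ (x * K / 2) * (1 + lam * m) ^ (-x / 2)
        < ((T * δ) ^ (x * K / 2) * (1 + lam * m) ^ (x / 2)) *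
            (1 + lam * m) ^ (-x / 2) := by
          apply mul_lt_mul_of_pos_right hrpow (Real.rpow_pos_of_pos hc1 _)
      _ = (T * δ) ^ (x * K / 2) *
            ((1 + lam * m) ^ (x / 2) * (1 + lam * m) ^ (-x / 2)) := by ring
      _ = (T * δ) ^ (x * K / 2) := by rw [hone, mul_one]
  calc β * ((T + lam) * δ) ^ (x * K / 2) *
        (A.det ^ (-x / 2) * (1 + lam * m) ^ (-x / 2))
      = β * A.det ^ (-x / 2) *
          (((T + lam) * δ) ^ (x * K / 2) * (1 + lam * m) ^ (-x / 2)) := by ring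
    _ < β * A.det ^ (-x / 2) * ((T * δ) ^ (x * K / 2)) := by
        apply mul_lt_mul_of_pos_left hgoal (by positivity)
    _ = β * (T * δ) ^ (x * K / 2) * A.det ^ (-x / 2) := by ring
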